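/- In VB_n, for 2 ≤ i < j ≤ n the following conjugating rules hold: ρ_{i−1} λ_{ij} ρ_{i−1} = λ_{i−1,j} and ρ_{i−1} λ_{ji} ρ_{i−1} = λ_{j,i−1}. -/

import Mathlib

/-- Generators of the virtual braid group `VB n`:
`Sum.inl i` is the braid generator σ_{i+1} and `Sum.inr i` is the virtual
generator ρ_{i+1} (0-based index `i : Fin (n-1)`, paper indices are 1-based). -/
abbrev VBGen (n : ℕ) := Fin (n - 1) ⊕ Fin (n - 1)

/-- σ-letter in the free group. -/
def fS {n : ℕ} (i : Fin (n - 1)) : FreeGroup (VBGen n) := FreeGroup.of (Sum.inl i)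

/-- ρ-letter in the free group. -/
def fR {n : ℕ} (i : Fin (n - 1)) : FreeGroup (VBGen n) := FreeGroup.of (Sum.inr i)

/-- The defining relators of the virtual braid group `VB_n`. -/
def vbRels (n : ℕ) : Set (FreeGroup (VBGen n)) :=
  {r | (∃ i j : Fin (n - 1), (i : ℕ) + 1 = (j : ℕ) ∧
          r = fS i * fS j * fS i * (fS j * fS i * fS j)⁻¹) ∨
       (∃ i j : Fin (n - 1), (i : ℕ) + 2 ≤ (j : ℕ) ∧
          r = fS i * fS j * (fS j * fS i)⁻¹) ∨
       (∃ i j : Fin (n - 1), (i : ℕ) + 1 = (j : ℕ) ∧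
          r = fR i * fR j * fR i * (fR j * fR i * fR j)⁻¹) ∨
       (∃ i j : Fin (n - 1), (i : ℕ) + 2 ≤ (j : ℕ) ∧
          r = fR i * fR j * (fR j * fR i)⁻¹) ∨
       (∃ i : Fin (n - 1), r = fR i * fR i) ∨
       (∃ i j : Fin (n - 1), ((i : ℕ) + 2 ≤ (j : ℕ) ∨ (j : ℕ) + 2 ≤ (i : ℕ)) ∧
          r = fS i * fR j * (fR j * fS i)⁻¹) ∨
       (∃ i j : Fin (n - 1), (i : ℕ) + 1 = (j : ℕ) ∧
          r = fR i * fR j * fS i * (fS j * fR i * fR j)⁻¹)}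

/-- The virtual braid group `VB_n` as a presented group. -/
abbrev VB (n : ℕ) := PresentedGroup (vbRels n)

/-- The generator σ_i of `VB n`, with the paper's 1-based index `1 ≤ i ≤ n-1`
(junk value `1` outside that range). -/
def sig {n : ℕ} (i : ℕ) : VB n :=
  if h : 1 ≤ i ∧ i ≤ n - 1 then PresentedGroup.of (Sum.inl ⟨i - 1, by omega⟩) else 1

/-- The generator ρ_i of `VB n`, with the paper's 1-based index. -/
def rho {n : ℕ} (i : ℕ) : VB n :=
  if h : 1 ≤ i ∧ i ≤ n - 1 then PresentedGroup.of (Sum.inr ⟨i - 1, by omega⟩) else 1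

/-- The ascending product ρ_a ρ_{a+1} ⋯ ρ_b (equal to `1` if `a > b`). -/
def asc {n : ℕ} (a b : ℕ) : VB n := ((List.range' a (b + 1 - a)).map (rho (n := n))).prod

/-- The descending product ρ_b ρ_{b-1} ⋯ ρ_a (equal to `1` if `a > b`). -/
def desc {n : ℕ} (a b : ℕ) : VB n :=
  (((List.range' a (b + 1 - a)).map (rho (n := n))).reverse).prod

/-- λ_{k l} for 1-based indices `k ≠ l`:
for `k < l`, λ_{k l} = ρ_{l-1} ⋯ ρ_{k+1} (ρ_k σ_k⁻¹) ρ_{k+1} ⋯ ρ_{l-1};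
for `l < k`, λ_{k l} = ρ_{k-1} ⋯ ρ_{l+1} (σ_l⁻¹ ρ_l) ρ_{l+1} ⋯ ρ_{k-1}. -/
def lam {n : ℕ} (k l : ℕ) : VB n :=
  if k < l then desc (k + 1) (l - 1) * (rho k * (sig k)⁻¹) * asc (k + 1) (l - 1)
  else desc (l + 1) (k - 1) * ((sig l)⁻¹ * rho l) * asc (l + 1) (k - 1)

/-- `ν : VB_n → S_n` is characterized by sending both σ_i and ρ_i to the
transposition (i, i+1). -/
def IsNu {n : ℕ} (ν : VB n →* Equiv.Perm (Fin n)) : Prop :=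
  ∀ i : Fin (n - 1),
    ν (PresentedGroup.of (Sum.inl i)) =
      Equiv.swap ⟨(i : ℕ), by have := i.isLt; omega⟩ ⟨(i : ℕ) + 1, by have := i.isLt; omega⟩ ∧
    ν (PresentedGroup.of (Sum.inr i)) =
      Equiv.swap ⟨(i : ℕ), by have := i.isLt; omega⟩ ⟨(i : ℕ) + 1, by have := i.isLt; omega⟩

/-- The subgroup of `VB n` generated by the ρ-generators (a copy of `S_n`). -/
def Rsub (n : ℕ) : Subgroup (VB n) :=
  Subgroup.closure (Set.range fun i : Fin (n - 1) => (PresentedGroup.of (Sum.inr i) : VB n))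

/-- The subgroup of `VB n` generated by the λ_{k l} with `1 ≤ k ≠ l ≤ m`;
for `m = n` this is the virtual pure braid group `VP_n`, and in general it is
the canonical copy of `VP_m` inside `VP_n`. -/
def VPsub (n : ℕ) (m : ℕ) : Subgroup (VB n) :=
  Subgroup.closure {x | ∃ k l : ℕ, 1 ≤ k ∧ k ≤ m ∧ 1 ≤ l ∧ l ≤ m ∧ k ≠ l ∧ x = lam k l}

/-- `V_i^*`: the normal closure, inside the copy of `VP_{i+1}`, of the subgroup
`V_i = ⟨λ_{k,i+1}, λ_{i+1,k} : 1 ≤ k ≤ i⟩`. -/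
def Vstar (n : ℕ) (i : ℕ) : Subgroup (VB n) :=
  Subgroup.closure {x | ∃ g ∈ VPsub n (i + 1), ∃ k : ℕ, 1 ≤ k ∧ k ≤ i ∧
    (x = g⁻¹ * lam k (i + 1) * g ∨ x = g⁻¹ * lam (i + 1) k * g)}


section Aux

private lemma relOne {n : ℕ} {r : FreeGroup (VBGen n)} (h : r ∈ vbRels n) :
    (QuotientGroup.mk r : VB n) = 1 :=
  (QuotientGroup.eq_one_iff r).mpr (Subgroup.subset_normalClosure h)

private lemma mk_rel_eq {n : ℕ} {a b : FreeGroup (VBGen n)} (h : a * b⁻¹ ∈ vbRels n) :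
    (QuotientGroup.mk a : VB n) = QuotientGroup.mk b := by
  have h1 := relOne h
  rw [QuotientGroup.mk_mul, QuotientGroup.mk_inv] at h1
  exact mul_inv_eq_one.mp h1

private lemma rho_eq {n : ℕ} (i : ℕ) (h1 : 1 ≤ i) (h2 : i ≤ n - 1) :
    (rho i : VB n) = QuotientGroup.mk (fR ⟨i - 1, by omega⟩) := by
  unfold rho; rw [dif_pos ⟨h1, h2⟩]; rfl

private lemma sig_eq {n : ℕ} (i : ℕ) (h1 : 1 ≤ i) (h2 : i ≤ n - 1) :
    (sig i : VB n) = QuotientGroup.mk (fS ⟨i - 1, by omega⟩) := by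
  unfold sig; rw [dif_pos ⟨h1, h2⟩]; rfl

private lemma rho_sq {n : ℕ} (i : ℕ) : (rho i : VB n) * rho i = 1 := by
  by_cases h : 1 ≤ i ∧ i ≤ n - 1
  · rw [rho_eq i h.1 h.2]
    exact relOne (r := fR ⟨i - 1, by omega⟩ * fR ⟨i - 1, by omega⟩)
      (Or.inr (Or.inr (Or.inr (Or.inr (Or.inl ⟨_, rfl⟩)))))
  · unfold rho; rw [dif_neg h]; simp

private lemma rho_braid {n : ℕ} (i : ℕ) (h1 : 1 ≤ i) (h2 : i + 1 ≤ n - 1) :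
    (rho i : VB n) * rho (i + 1) * rho i = rho (i + 1) * rho i * rho (i + 1) := by
  rw [rho_eq i h1 (by omega), rho_eq (i + 1) (by omega) h2]
  exact mk_rel_eq (Or.inr (Or.inr (Or.inl ⟨⟨i - 1, by omega⟩, ⟨i + 1 - 1, by omega⟩,
    by show i - 1 + 1 = i + 1 - 1; omega, rfl⟩)))

private lemma rho_comm {n : ℕ} (i j : ℕ) (h1 : 1 ≤ i) (h2 : i + 2 ≤ j) :
    (rho i : VB n) * rho j = rho j * rho i := by
  by_cases hj : j ≤ n - 1
  · rw [rho_eq i h1 (by omega), rho_eq j (by omega) hj]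
    exact mk_rel_eq (Or.inr (Or.inr (Or.inr (Or.inl ⟨⟨i - 1, by omega⟩, ⟨j - 1, by omega⟩,
      by show i - 1 + 2 ≤ j - 1; omega, rfl⟩))))
  · have : (rho j : VB n) = 1 := by unfold rho; rw [dif_neg (by omega)]
    rw [this, mul_one, one_mul]

private lemma mixed_rel {n : ℕ} (i : ℕ) (h1 : 1 ≤ i) (h2 : i + 1 ≤ n - 1) :
    (rho i : VB n) * rho (i + 1) * sig i = sig (i + 1) * rho i * rho (i + 1) := by
  rw [rho_eq i h1 (by omega), rho_eq (i + 1) (by omega) h2, sig_eq i h1 (by omega),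
    sig_eq (i + 1) (by omega) h2]
  exact mk_rel_eq (Or.inr (Or.inr (Or.inr (Or.inr (Or.inr (Or.inr
    ⟨⟨i - 1, by omega⟩, ⟨i + 1 - 1, by omega⟩, by show i - 1 + 1 = i + 1 - 1; omega, rfl⟩))))))

private lemma key_calc {G : Type*} [Group G] (a b s t : G)
    (ha : a * a = 1) (hb : b * b = 1) (hbr : a * b * a = b * a * b)
    (hm : a * b * s = t * a * b) :
    a * (b * t⁻¹) * a = b * (a * s⁻¹) * b ∧
    a * (t⁻¹ * b) * a = b * (s⁻¹ * a) * b := by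
  have ht : t⁻¹ = a * b * s⁻¹ * b * a := by
    apply inv_eq_of_mul_eq_one_right
    calc t * (a * b * s⁻¹ * b * a) = (t * a * b) * s⁻¹ * b * a := by group
      _ = (a * b * s) * s⁻¹ * b * a := by rw [hm]
      _ = a * (b * b) * a := by group
      _ = a * 1 * a := by rw [hb]
      _ = a * a := by group
      _ = 1 := ha
  constructor
  · calc a * (b * t⁻¹) * a
        = (a * b * a) * (b * s⁻¹ * b) * (a * a) := by rw [ht]; group
      _ = (b * a * b) * (b * s⁻¹ * b) * 1 := by rw [hbr, ha]
      _ = b * a * (b * b) * s⁻¹ * b := by group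
      _ = b * a * 1 * s⁻¹ * b := by rw [hb]
      _ = b * (a * s⁻¹) * b := by group
  · calc a * (t⁻¹ * b) * a
        = (a * a) * (b * s⁻¹) * (b * a * b) * a := by rw [ht]; group
      _ = 1 * (b * s⁻¹) * (a * b * a) * a := by rw [ha, ← hbr]
      _ = b * s⁻¹ * a * b * (a * a) := by group
      _ = b * s⁻¹ * a * b * 1 := by rw [ha]
      _ = b * (s⁻¹ * a) * b := by group

private lemma asc_cons {n : ℕ} (a b : ℕ) (h : a ≤ b) :
    (asc a b : VB n) = rho a * asc (a + 1) b := by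
  unfold asc
  rw [show b + 1 - a = (b + 1 - (a + 1)) + 1 by omega, List.range'_succ]
  simp

private lemma desc_cons {n : ℕ} (a b : ℕ) (h : a ≤ b) :
    (desc a b : VB n) = desc (a + 1) b * rho a := by
  unfold desc
  rw [show b + 1 - a = (b + 1 - (a + 1)) + 1 by omega, List.range'_succ]
  simp

private lemma commute_asc {n : ℕ} (x : VB n) (a b : ℕ)
    (h : ∀ k, a ≤ k → k ≤ b → Commute x (rho k)) : Commute x (asc a b) := by
  apply Commute.list_prod_right
  intro y hy
  simp only [List.mem_map, List.mem_range'_1] at hy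
  obtain ⟨k, ⟨hk1, hk2⟩, rfl⟩ := hy
  exact h k hk1 (by omega)

private lemma commute_desc {n : ℕ} (x : VB n) (a b : ℕ)
    (h : ∀ k, a ≤ k → k ≤ b → Commute x (rho k)) : Commute x (desc a b) := by
  apply Commute.list_prod_right
  intro y hy
  simp only [List.mem_reverse, List.mem_map, List.mem_range'_1] at hy
  obtain ⟨k, ⟨hk1, hk2⟩, rfl⟩ := hy
  exact h k hk1 (by omega)

end Aux

/-- for 2 ≤ i < j ≤ n, ρ_{i-1} λ_{ij} ρ_{i-1} = λ_{i-1,j} and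
ρ_{i-1} λ_{ji} ρ_{i-1} = λ_{j,i-1}. -/
theorem stmt_3 (n : ℕ) (hn : 2 ≤ n) (i j : ℕ) (hi : 2 ≤ i) (hij : i < j) (hj : j ≤ n) :
    (rho (i - 1) * lam i j * rho (i - 1) : VB n) = lam (i - 1) j ∧
    (rho (i - 1) * lam j i * rho (i - 1) : VB n) = lam j (i - 1) := by
  set X : VB n := rho (i - 1) with hXdef
  set D : VB n := desc (i + 1) (j - 1) with hDdef
  set A : VB n := asc (i + 1) (j - 1) with hAdef
  have hcD : Commute X D := commute_desc X _ _ (fun k hk1 hk2 =>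
    (rho_comm (i - 1) k (by omega) (by omega)))
  have hcA : Commute X A := commute_asc X _ _ (fun k hk1 hk2 =>
    (rho_comm (i - 1) k (by omega) (by omega)))
  have hi1 : i - 1 + 1 = i := by omega
  have hkey := key_calc (rho (i - 1) : VB n) (rho i) (sig (i - 1)) (sig i)
    (rho_sq _) (rho_sq _)
    (by have := rho_braid (n := n) (i - 1) (by omega) (by omega); rwa [hi1] at this)
    (by have := mixed_rel (n := n) (i - 1) (by omega) (by omega); rwa [hi1] at this)
  have hlam1 : (lam i j : VB n) = D * (rho i * (sig i)⁻¹) * A := by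
    rw [lam, if_pos hij]
  have hlam2 : (lam (i - 1) j : VB n) = (D * rho i) * (rho (i - 1) * (sig (i - 1))⁻¹) * (rho i * A) := by
    rw [lam, if_pos (by omega : i - 1 < j), hi1,
      desc_cons i (j - 1) (by omega), asc_cons i (j - 1) (by omega)]
  have hlam3 : (lam j i : VB n) = D * ((sig i)⁻¹ * rho i) * A := by
    rw [lam, if_neg (by omega : ¬ j < i)]
  have hlam4 : (lam j (i - 1) : VB n) = (D * rho i) * ((sig (i - 1))⁻¹ * rho (i - 1)) * (rho i * A) := by
    rw [lam, if_neg (by omega : ¬ j < i - 1), hi1,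
      desc_cons i (j - 1) (by omega), asc_cons i (j - 1) (by omega)]
  constructor
  · rw [hlam1, hlam2]
    calc X * (D * (rho i * (sig i)⁻¹) * A) * X
        = (X * D) * (rho i * (sig i)⁻¹) * (A * X) := by group
      _ = (D * X) * (rho i * (sig i)⁻¹) * (X * A) := by rw [hcD.eq, ← hcA.eq]
      _ = D * (X * (rho i * (sig i)⁻¹) * X) * A := by group
      _ = D * (rho i * (rho (i - 1) * (sig (i - 1))⁻¹) * rho i) * A := by rw [hXdef, hkey.1]
      _ = (D * rho i) * (rho (i - 1) * (sig (i - 1))⁻¹) * (rho i * A) := by group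
  · rw [hlam3, hlam4]
    calc X * (D * ((sig i)⁻¹ * rho i) * A) * X
        = (X * D) * ((sig i)⁻¹ * rho i) * (A * X) := by group
      _ = (D * X) * ((sig i)⁻¹ * rho i) * (X * A) := by rw [hcD.eq, ← hcA.eq]
      _ = D * (X * ((sig i)⁻¹ * rho i) * X) * A := by group
      _ = D * (rho i * ((sig (i - 1))⁻¹ * rho (i - 1)) * rho i) * A := by rw [hXdef, hkey.2]
      _ = (D * rho i) * ((sig (i - 1))⁻¹ * rho (i - 1)) * (rho i * A) := by group
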